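/- In a spherical tiling by angle congruent pentagons, the total number of angle occurrences not appearing at degree-3 vertices is at most Σ_{k≥4} k v_k, and 2f - Σ_{k≥4} k v_k = 24 + Σ_{k≥4} 3(k-4) v_k > 0; hence at most one angle of the pentagon (counted with multiplicity) fails to appear at degree-3 vertices. -/

import Mathlib

open Finset

/-- In a spherical tiling by angle congruent pentagons, if `m` angles of the pentagon
(counted with multiplicity) fail to appear at degree-3 vertices, then all their
`m·f` occurrences lie among the `∑_{k≥4} k·vk` angle slots at high degree vertices.
Since `2f = (24 + ∑_{k≥4} 3(k-4) vk) + ∑_{k≥4} k·vk`, i.e.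
`2f - ∑_{k≥4} k·vk = 24 + ∑_{k≥4} 3(k-4) vk > 0`, we get `m ≤ 1`. -/
theorem stmt_5 (f m N : ℕ) (vk : ℕ → ℕ)
    (hf : f = 12 + 2 * ∑ k ∈ Finset.Icc 4 N, (k - 3) * vk k)
    (hm : m * f ≤ ∑ k ∈ Finset.Icc 4 N, k * vk k) :
    2 * f = (24 + ∑ k ∈ Finset.Icc 4 N, 3 * (k - 4) * vk k)
      + ∑ k ∈ Finset.Icc 4 N, k * vk k ∧ m ≤ 1 := by
  have key : ∑ k ∈ Finset.Icc 4 N, 4 * ((k - 3) * vk k)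
      = ∑ k ∈ Finset.Icc 4 N, (3 * (k - 4) * vk k + k * vk k) := by
    apply Finset.sum_congr rfl
    intro k hk
    have hk4 : 4 ≤ k := (Finset.mem_Icc.mp hk).1
    have : 3 * (k - 4) + k = 4 * (k - 3) := by omega
    nlinarith [this]
  rw [Finset.sum_add_distrib] at key
  rw [← Finset.mul_sum] at key
  have heq : 2 * f = (24 + ∑ k ∈ Finset.Icc 4 N, 3 * (k - 4) * vk k)
      + ∑ k ∈ Finset.Icc 4 N, k * vk k := by omega
  refine ⟨heq, ?_⟩
  by_contra h
  have hm2 : 2 ≤ m := by omega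
  have := Nat.mul_le_mul_right f hm2
  omega
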